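/- Let (Ω, μ) be a measure space, let η : ℝ → ℝ be continuous and nondecreasing with η(0) = 0, and let (v_k)_{k∈ℕ} be a sequence of measurable functions Ω → ℝ such that x ↦ η(v_k(x))·v_k(x) is integrable and ∫_Ω η(v_k(x))·v_k(x) dμ(x) ≤ C₀ for every k, where C₀ ≥ 0 is a constant independent of k. Then the family {η ∘ v_k : k ∈ ℕ} is uniformly integrable: for every ε > 0 there exists δ > 0 such that for every measurable set A ⊆ Ω with μ(A) ≤ δ and every k ∈ ℕ, ∫_A |η(v_k(x))| dμ(x) ≤ ε. -/

import Mathlib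

open MeasureTheory

lemma eta_nonneg_mul {η : ℝ → ℝ} (hη : Monotone η) (hη0 : η 0 = 0) (s : ℝ) :
    0 ≤ η s * s := by
  rcases le_total 0 s with h | h
  · have : 0 ≤ η s := hη0 ▸ hη h
    positivity
  · have : η s ≤ 0 := hη0 ▸ hη h
    nlinarith

lemma eta_ptwise {η : ℝ → ℝ} (hη : Monotone η) (hη0 : η 0 = 0) (M : ℝ) (hM : 0 < M)
    (s : ℝ) : |η s| ≤ max (η M) (-η (-M)) + η s * s / M := by
  set B := max (η M) (-η (-M)) with hB
  rcases le_or_gt (|s|) M with h | h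
  · have h1 : η s ≤ η M := hη (le_trans (le_abs_self s) h)
    have h2 : η (-M) ≤ η s := hη (by
      have := neg_abs_le s
      linarith [abs_le.mp h])
    have : |η s| ≤ B := by
      rw [abs_le]
      refine ⟨?_, le_trans h1 (le_max_left _ _)⟩
      have := le_max_right (η M) (-η (-M))
      linarith
    have hnn := eta_nonneg_mul hη hη0 s
    have : η s * s / M ≥ 0 := by positivity
    linarith
  · have hBnn : 0 ≤ B := by
      rcases le_total 0 s with hs | hs
      · have : 0 ≤ η M := hη0 ▸ hη hM.le
        exact le_trans this (le_max_left _ _)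
      · have : η (-M) ≤ 0 := hη0 ▸ hη (by linarith)
        exact le_trans (by linarith) (le_max_right _ _)
    have key : |η s| ≤ η s * s / M := by
      have heq : η s * s = |η s| * |s| := by
        rw [← abs_mul, abs_of_nonneg (eta_nonneg_mul hη hη0 s)]
      rw [le_div_iff₀ hM, heq]
      nlinarith [abs_nonneg (η s)]
    linarith

/-- Uniform integrability of the family `η ∘ v_k` when
`∫ η(v_k) · v_k ≤ C₀` uniformly in `k`, for `η` continuous, nondecreasing,
with `η 0 = 0`. -/
theorem stmt_2 {Ω : Type*} [MeasurableSpace Ω] (μ : Measure Ω)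
    (η : ℝ → ℝ) (hηc : Continuous η) (hη : Monotone η) (hη0 : η 0 = 0)
    (v : ℕ → Ω → ℝ) (hv : ∀ k, Measurable (v k))
    (C₀ : ℝ) (hC₀ : 0 ≤ C₀)
    (hint : ∀ k, Integrable (fun x => η (v k x) * v k x) μ)
    (hbound : ∀ k, ∫ x, η (v k x) * v k x ∂μ ≤ C₀) :
    ∀ ε > (0 : ℝ), ∃ δ > (0 : ℝ), ∀ A : Set Ω, MeasurableSet A →
      μ A ≤ ENNReal.ofReal δ → ∀ k, ∫ x in A, |η (v k x)| ∂μ ≤ ε := by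
  intro ε hε
  set M : ℝ := max 1 (2 * C₀ / ε) with hMdef
  have hM : 0 < M := lt_of_lt_of_le one_pos (le_max_left _ _)
  set B : ℝ := max (η M) (-η (-M)) with hBdef
  have hBnn : 0 ≤ B := by
    have : 0 ≤ η M := hη0 ▸ hη hM.le
    exact le_trans this (le_max_left _ _)
  refine ⟨ε / (2 * (B + 1)), by positivity, ?_⟩
  intro A hA hAδ k
  have hμA : μ A ≠ ⊤ := by
    exact ne_top_of_le_ne_top ENNReal.ofReal_ne_top hAδ
  have hfin : μ A < ⊤ := lt_top_iff_ne_top.mpr hμA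
  have hmeas : AEStronglyMeasurable (fun x => |η (v k x)|) (μ.restrict A) :=
    (hηc.measurable.comp (hv k)).abs.aestronglyMeasurable
  haveI : IsFiniteMeasure (μ.restrict A) := ⟨by rwa [Measure.restrict_apply_univ]⟩
  set g : Ω → ℝ := fun x => B + η (v k x) * v k x / M with hgdef
  have hgint : Integrable g (μ.restrict A) := by
    refine Integrable.add (integrable_const _) ?_
    exact ((hint k).div_const M).restrict
  have hptw : ∀ x, |η (v k x)| ≤ g x := fun x => eta_ptwise hη hη0 M hM (v k x)
  have habs_int : Integrable (fun x => |η (v k x)|) (μ.restrict A) := by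
    refine Integrable.mono' hgint hmeas (Filter.Eventually.of_forall fun x => ?_)
    rw [Real.norm_eq_abs, abs_abs]
    exact hptw x
  have h1 : ∫ x in A, |η (v k x)| ∂μ ≤ ∫ x in A, g x ∂μ :=
    integral_mono habs_int hgint hptw
  have h2 : ∫ x in A, g x ∂μ = B * (μ A).toReal + (∫ x in A, η (v k x) * v k x ∂μ) / M := by
    rw [hgdef, integral_add (integrable_const _) (((hint k).div_const M).restrict),
      integral_const, integral_div]
    simp [Measure.restrict_apply_univ, mul_comm, measureReal_def]
  have h3 : ∫ x in A, η (v k x) * v k x ∂μ ≤ C₀ := by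
    refine le_trans (setIntegral_le_integral (hint k)
      (Filter.Eventually.of_forall fun x => eta_nonneg_mul hη hη0 (v k x))) (hbound k)
  have h4 : (μ A).toReal ≤ ε / (2 * (B + 1)) := by
    refine ENNReal.toReal_le_of_le_ofReal (by positivity) hAδ
  have h5 : B * (μ A).toReal ≤ ε / 2 := by
    have : B * (μ A).toReal ≤ B * (ε / (2 * (B + 1))) :=
      mul_le_mul_of_nonneg_left h4 hBnn
    refine le_trans this ?_
    rw [mul_div_assoc']
    rw [div_le_div_iff₀ (by positivity) (by norm_num)]
    nlinarith
  have h6 : (∫ x in A, η (v k x) * v k x ∂μ) / M ≤ ε / 2 := by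
    have hnn : 0 ≤ ∫ x in A, η (v k x) * v k x ∂μ :=
      integral_nonneg fun x => eta_nonneg_mul hη hη0 (v k x)
    have hMge : 2 * C₀ / ε ≤ M := le_max_right _ _
    have hMε : 2 * C₀ ≤ M * ε := by
      rw [div_le_iff₀ hε] at hMge; linarith
    rw [div_le_div_iff₀ hM (by norm_num)]
    nlinarith
  linarith
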